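/- In the collapse setting, a k-set A with Λ(A) = 1 is essential (i.e. V*(Λ𝟙_{{A}^C}) ≠ V*(Λ)) if and only if exactly one vertex of A is not identifiable in the hypergraph with the hyperedge over A removed, i.e. |A \ V*(Λ𝟙_{{A}^C})| = 1. Moreover a set with Λ(A) ≠ 1 is never essential. -/

import Mathlib

/-- A vertex is identifiable in the hypergraph `Λ` if it can be removed by the
collapse algorithm: `v` is identifiable iff there is a hyperedge `A ∋ v`
(i.e. `Λ A ≥ 1`) all of whose other vertices are identifiable. -/
inductive Ident {V : Type*} (Λ : Finset V → ℕ) : V → Prop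
  | intro (A : Finset V) (v : V) (hv : v ∈ A) (hΛ : 1 ≤ Λ A)
      (h : ∀ w ∈ A, w ≠ v → Ident Λ w) : Ident Λ v

/-- The set `V*(Λ)` of identifiable vertices. -/
def identSet {V : Type*} (Λ : Finset V → ℕ) : Set V := {v | Ident Λ v}

lemma Ident.mono {V : Type*} {Λ₁ Λ₂ : Finset V → ℕ}
    (hle : ∀ B, 1 ≤ Λ₁ B → 1 ≤ Λ₂ B) {v : V} (h : Ident Λ₁ v) : Ident Λ₂ v := by
  induction h with
  | intro B v hv hΛB h ih => exact Ident.intro B v hv (hle B hΛB) ih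

/-- A set `A` with `Λ(A) = 1` is essential (removing its hyperedge changes the set of
identifiable vertices) iff exactly one vertex of `A` is not identifiable in the
hypergraph with the hyperedge over `A` removed.  A set with `Λ(A) ≠ 1` is never
essential (removing one hyperedge over it changes nothing). -/
theorem essential_iff_one_not_identifiable
    {V : Type*} [Fintype V] [DecidableEq V] (Λ : Finset V → ℕ) (A : Finset V) :
    (Λ A = 1 →
      (identSet (Function.update Λ A (Λ A - 1)) ≠ identSet Λ ↔
        ((A : Set V) \ identSet (Function.update Λ A (Λ A - 1))).ncard = 1)) ∧
    (Λ A ≠ 1 → identSet (Function.update Λ A (Λ A - 1)) = identSet Λ) := by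
  set Λ' := Function.update Λ A (Λ A - 1) with hΛ'def
  have hΛ'A : Λ' A = Λ A - 1 := Function.update_self _ _ _
  have hΛ'B : ∀ B, B ≠ A → Λ' B = Λ B := fun B hB => Function.update_of_ne hB _ _
  have mono : ∀ v, Ident Λ' v → Ident Λ v := by
    intro v h
    refine h.mono (fun B hB => le_trans hB ?_)
    by_cases hBA : B = A
    · subst hBA; rw [hΛ'A]; exact Nat.sub_le _ _
    · rw [hΛ'B B hBA]
  constructor
  · intro hA1
    have hΛ'A0 : Λ' A = 0 := by rw [hΛ'A, hA1]
    constructor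
    · intro hne
      by_contra hcard
      apply hne
      have key : ∀ v, Ident Λ v → Ident Λ' v := by
        rcases Nat.lt_or_ge (((A : Set V) \ identSet Λ').ncard) 1 with h0 | h1
        · -- ncard = 0 : A ⊆ identSet Λ'
          have hfin : ((A : Set V) \ identSet Λ').Finite := A.finite_toSet.diff
          have hempty : ((A : Set V) \ identSet Λ') = ∅ :=
            (Set.ncard_eq_zero hfin).mp (Nat.lt_one_iff.mp h0)
          have hsub : (A : Set V) ⊆ identSet Λ' := by
            intro x hx
            by_contra hxn
            have hmem : x ∈ (A : Set V) \ identSet Λ' := ⟨hx, hxn⟩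
            rw [hempty] at hmem
            exact hmem
          intro v hv
          induction hv with
          | intro B v hvB hΛB h ih =>
            by_cases hB : B = A
            · exact hsub (hB ▸ hvB)
            · exact Ident.intro B v hvB (by rw [hΛ'B B hB]; exact hΛB) ih
        · -- ncard ≥ 2
          have h2 : 1 < ((A : Set V) \ identSet Λ').ncard :=
            lt_of_le_of_ne h1 (Ne.symm hcard)
          obtain ⟨a, b, ha, hb, hab⟩ :=
            (Set.one_lt_ncard_iff (A.finite_toSet.diff)).mp h2
          intro v hv
          induction hv with
          | intro B v hvB hΛB h ih =>
            by_cases hB : B = A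
            · subst hB
              rcases ne_or_eq a v with hav | rfl
              · exact absurd (ih a ha.1 hav) ha.2
              · exact absurd (ih b hb.1 (fun hbv => hab hbv.symm)) hb.2
            · exact Ident.intro B v hvB (by rw [hΛ'B B hB]; exact hΛB) ih
      ext v
      exact ⟨fun h => mono v h, fun h => key v h⟩
    · intro hcard
      obtain ⟨a, ha⟩ := Set.ncard_eq_one.mp hcard
      have haA : a ∈ A := by
        have : a ∈ (A : Set V) \ identSet Λ' := ha ▸ rfl
        exact this.1
      have hanid : ¬ Ident Λ' a := by
        have : a ∈ (A : Set V) \ identSet Λ' := ha ▸ rfl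
        exact this.2
      have haid : Ident Λ a := by
        refine Ident.intro A a haA (by rw [hA1]) (fun w hw hwa => mono w ?_)
        by_contra hwn
        have : w ∈ (A : Set V) \ identSet Λ' := ⟨hw, hwn⟩
        rw [ha] at this
        exact hwa this
      intro heq
      have : a ∈ identSet Λ := haid
      rw [← heq] at this
      exact hanid this
  · intro hA1
    rcases Nat.eq_zero_or_pos (Λ A) with h0 | hpos
    · have : Λ' = Λ := by
        have h01 : Λ A - 1 = Λ A := by omega
        rw [hΛ'def, h01, Function.update_eq_self]
      rw [this]
    · have h2 : 2 ≤ Λ A := by omega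
      have hiff : ∀ B, 1 ≤ Λ B → 1 ≤ Λ' B := by
        intro B hB
        by_cases hBA : B = A
        · subst hBA; rw [hΛ'A]; omega
        · rw [hΛ'B B hBA]; exact hB
      ext v
      exact ⟨fun h => mono v h, fun h => h.mono hiff⟩
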